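/- (Calendar-arbitrage condition implies call prices nondecreasing in expiry.) Fix k ∈ ℝ and let v : (0,∞) → (0,∞) be such that τ ↦ v(τ)·√τ is nondecreasing. Then τ ↦ BS(τ,k,v(τ)) is nondecreasing on (0,∞). -/

import Mathlib

open Real Filter Set MeasureTheory intervalIntegral

/-- Standard normal probability density function. -/
noncomputable def stdGaussPDF (x : ℝ) : ℝ :=
  (Real.sqrt (2 * Real.pi))⁻¹ * Real.exp (-(x ^ 2) / 2)

/-- Standard normal cumulative distribution function. -/
noncomputable def stdGaussCDF (x : ℝ) : ℝ :=
  ∫ t in Set.Iic x, stdGaussPDF t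

/-- d1 term of the Black–Scholes formula. -/
noncomputable def d1 (τ k v : ℝ) : ℝ :=
  -k / (v * Real.sqrt τ) + v * Real.sqrt τ / 2

/-- d2 term of the Black–Scholes formula. -/
noncomputable def d2 (τ k v : ℝ) : ℝ :=
  -k / (v * Real.sqrt τ) - v * Real.sqrt τ / 2

/-- Black–Scholes call price in units of the forward. -/
noncomputable def BS (τ k v : ℝ) : ℝ :=
  stdGaussCDF (d1 τ k v) - Real.exp k * stdGaussCDF (d2 τ k v)

/-- The butterfly functional. -/
noncomputable def But (τ k v₀ v₁ v₂ : ℝ) : ℝ :=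
  (1 + d1 τ k v₀ * v₁ * Real.sqrt τ) * (1 + d2 τ k v₀ * v₁ * Real.sqrt τ) + v₀ * v₂ * τ

lemma stdGaussPDF_pos (x : ℝ) : 0 < stdGaussPDF x := by
  unfold stdGaussPDF
  positivity

lemma continuous_stdGaussPDF : Continuous stdGaussPDF := by
  unfold stdGaussPDF; continuity

lemma integrable_stdGaussPDF : Integrable stdGaussPDF := by
  have h : Integrable (fun x : ℝ => Real.exp (-(1/2 : ℝ) * x ^ 2)) :=
    integrable_exp_neg_mul_sq (by norm_num)
  have := h.const_mul (Real.sqrt (2 * Real.pi))⁻¹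
  convert this using 2 with x
  unfold stdGaussPDF
  ring_nf

lemma hasDerivAt_stdGaussCDF (x : ℝ) : HasDerivAt stdGaussCDF (stdGaussPDF x) x := by
  have key : ∀ y : ℝ, stdGaussCDF y = stdGaussCDF 0 + ∫ t in (0:ℝ)..y, stdGaussPDF t := by
    intro y
    have := integral_Iic_sub_Iic (integrable_stdGaussPDF.integrableOn (s := Iic (0:ℝ)))
      (integrable_stdGaussPDF.integrableOn (s := Iic y)) (μ := volume)
    simp only [stdGaussCDF]
    linarith [this]
  have hD : HasDerivAt (fun y => stdGaussCDF 0 + ∫ t in (0:ℝ)..y, stdGaussPDF t)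
      (stdGaussPDF x) x := by
    have h1 : HasDerivAt (fun y => ∫ t in (0:ℝ)..y, stdGaussPDF t) (stdGaussPDF x) x := by
      refine (integral_hasStrictDerivAt_right
        (integrable_stdGaussPDF.intervalIntegrable)
        (continuous_stdGaussPDF.stronglyMeasurableAtFilter _ _)
        continuous_stdGaussPDF.continuousAt).hasDerivAt
    simpa [Pi.add_def] using (hasDerivAt_const x (stdGaussCDF 0)).add h1
  exact hD.congr_of_eventuallyEq (Filter.Eventually.of_forall key)

/-- Call price as a function of total volatility `w`. -/
noncomputable def FC (k w : ℝ) : ℝ :=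
  stdGaussCDF (-k / w + w / 2) - Real.exp k * stdGaussCDF (-k / w - w / 2)

lemma pdf_identity (k w : ℝ) (hw : w ≠ 0) :
    Real.exp k * stdGaussPDF (-k / w - w / 2) = stdGaussPDF (-k / w + w / 2) := by
  unfold stdGaussPDF
  have : k + -(-k / w - w / 2) ^ 2 / 2 = -(-k / w + w / 2) ^ 2 / 2 := by
    field_simp
    ring
  rw [mul_left_comm, ← Real.exp_add, this]

lemma hasDerivAt_FC (k : ℝ) {w : ℝ} (hw : 0 < w) :
    HasDerivAt (FC k) (stdGaussPDF (-k / w + w / 2)) w := by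
  have hw' : w ≠ 0 := ne_of_gt hw
  have h1 : HasDerivAt (fun w : ℝ => -k / w + w / 2) (k / w ^ 2 + 1 / 2) w := by
    have ha : HasDerivAt (fun w : ℝ => -k / w) (k / w ^ 2) w := by
      have h := (hasDerivAt_inv hw').const_mul (-k)
      have hval : -k * -(w ^ 2)⁻¹ = k / w ^ 2 := by field_simp
      rw [hval] at h
      simpa only [div_eq_mul_inv] using h
    simpa [Pi.add_def] using ha.add ((hasDerivAt_id w).div_const 2)
  have h2 : HasDerivAt (fun w : ℝ => -k / w - w / 2) (k / w ^ 2 - 1 / 2) w := by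
    have ha : HasDerivAt (fun w : ℝ => -k / w) (k / w ^ 2) w := by
      have h := (hasDerivAt_inv hw').const_mul (-k)
      have hval : -k * -(w ^ 2)⁻¹ = k / w ^ 2 := by field_simp
      rw [hval] at h
      simpa only [div_eq_mul_inv] using h
    simpa [Pi.sub_def] using ha.sub ((hasDerivAt_id w).div_const 2)
  have H1 := (hasDerivAt_stdGaussCDF (-k / w + w / 2)).comp w h1
  have H2 := ((hasDerivAt_stdGaussCDF (-k / w - w / 2)).comp w h2).const_mul (Real.exp k)
  have H := H1.sub H2
  have heq : stdGaussPDF (-k / w + w / 2) * (k / w ^ 2 + 1 / 2) -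
      Real.exp k * (stdGaussPDF (-k / w - w / 2) * (k / w ^ 2 - 1 / 2)) =
      stdGaussPDF (-k / w + w / 2) := by
    rw [show Real.exp k * (stdGaussPDF (-k / w - w / 2) * (k / w ^ 2 - 1 / 2)) =
      (Real.exp k * stdGaussPDF (-k / w - w / 2)) * (k / w ^ 2 - 1 / 2) by ring,
      pdf_identity k w hw']
    ring
  rw [heq] at H
  exact H

lemma FC_strictMono (k : ℝ) : StrictMonoOn (FC k) (Set.Ioi (0:ℝ)) := by
  apply strictMonoOn_of_deriv_pos (convex_Ioi 0)
  · intro x hx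
    exact ((hasDerivAt_FC k hx).continuousAt).continuousWithinAt
  · intro x hx
    rw [interior_Ioi] at hx
    rw [(hasDerivAt_FC k hx).deriv]
    exact stdGaussPDF_pos _

theorem stmt8 (k : ℝ) (v : ℝ → ℝ) (hv : ∀ τ, 0 < τ → 0 < v τ)
    (hmono : MonotoneOn (fun τ => v τ * Real.sqrt τ) (Set.Ioi (0 : ℝ))) :
    MonotoneOn (fun τ => BS τ k (v τ)) (Set.Ioi (0 : ℝ)) := by
  intro a ha b hb hab
  have hwa : 0 < v a * Real.sqrt a :=
    mul_pos (hv a ha) (Real.sqrt_pos.mpr (mem_Ioi.mp ha))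
  have hwb : 0 < v b * Real.sqrt b :=
    mul_pos (hv b hb) (Real.sqrt_pos.mpr (mem_Ioi.mp hb))
  have key : ∀ τ, 0 < τ → BS τ k (v τ) = FC k (v τ * Real.sqrt τ) := by
    intro τ hτ
    simp only [BS, FC, d1, d2]
  simp only [key a (mem_Ioi.mp ha), key b (mem_Ioi.mp hb)]
  exact (FC_strictMono k).monotoneOn hwa hwb (hmono ha hb hab)
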